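/- Let B ⊆ D with |B| odd, and let p_B : 2^{D∖B} → [0,∞) satisfy Σ_{A ⊆ D∖B} p_B(A) = 1, extended by p_B(A) = 0 if A is not a subset of D∖B. For a map τ : 2^D → ℝ define I_τ(B) = Σ_{A ⊆ D} (−1)^{|B∖A|} p_B(A∖B) τ(A) and the dual τ*(A) = τ(D) − τ(D∖A). Then I_{τ*}(B) = I_τ(B) holds for every map τ : 2^D → [0,∞) with τ(∅) = 0 if and only if p_B(A∖B) = p_B(D ∖ (A ∪ B)) for every nonempty A ⊆ D. -/

import Mathlib

open Finset

private lemma aux_sum_zero {d : ℕ} (B : Finset (Fin d)) (hB : B.Nonempty)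
    (p : Finset (Fin d) → ℝ) :
    ∑ A : Finset (Fin d), (-1 : ℝ) ^ (B \ A).card * p (A \ B) = 0 := by
  obtain ⟨b, hb⟩ := hB
  apply Finset.sum_involution
    (g := fun A _ => if b ∈ A then A.erase b else insert b A)
  · intro A _
    by_cases hA : b ∈ A
    · simp only [hA, if_true]
      have h1 : A.erase b \ B = A \ B := by
        ext x; simp only [mem_sdiff, mem_erase]
        constructor
        · tauto
        · rintro ⟨hx, hxB⟩; exact ⟨⟨fun h => hxB (h ▸ hb), hx⟩, hxB⟩
      have h2 : B \ A.erase b = insert b (B \ A) := by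
        ext x; simp only [mem_sdiff, mem_erase, mem_insert]
        by_cases hx : x = b <;> simp [hx, hb, hA]
      rw [h1, h2, card_insert_of_notMem (by simp [hA])]
      ring
    · simp only [hA, if_false]
      have h1 : insert b A \ B = A \ B := insert_sdiff_of_mem A hb
      have h2 : B \ A = insert b (B \ insert b A) := by
        ext x; simp only [mem_sdiff, mem_insert]
        by_cases hx : x = b <;> simp [hx, hb, hA]
      rw [h1, h2, card_insert_of_notMem (by simp)]
      ring
  · intro A _ _
    by_cases hA : b ∈ A <;> simp only [hA, if_true, if_false]
    · intro h; exact (h ▸ (Finset.notMem_erase b A)) hA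
    · intro h; exact hA (h ▸ Finset.mem_insert_self b A)
  · intro A _
    by_cases hA : b ∈ A
    · simp [hA, Finset.notMem_erase, Finset.insert_erase hA]
    · simp [hA, Finset.mem_insert_self, Finset.erase_insert hA]
  · intro A _; exact Finset.mem_univ (if b ∈ A then A.erase b else insert b A)

private lemma aux_sign {i s n : ℕ} (h : i + s = n) (hn : Odd n) :
    (-1 : ℝ) ^ i = -(-1 : ℝ) ^ s := by
  subst h
  rcases Nat.even_or_odd s with hs | hs
  · have hi : Odd i := (Nat.odd_add.mp hn).mpr hs
    rw [hi.neg_one_pow, hs.neg_one_pow]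
  · have hi : Even i := Nat.not_odd_iff_even.mp
      (fun hoi => (Nat.not_odd_iff_even.mpr ((Nat.odd_add.mp hn).mp hoi)) hs)
    rw [hi.neg_one_pow, hs.neg_one_pow]; ring

private lemma aux_rw {d : ℕ} (B : Finset (Fin d)) (hodd : Odd B.card)
    (p : Finset (Fin d) → ℝ) (τ : Finset (Fin d) → ℝ) :
    ∑ A : Finset (Fin d), (-1 : ℝ) ^ (B \ A).card * p (A \ B) * (τ Finset.univ - τ Aᶜ)
      = ∑ A : Finset (Fin d), (-1 : ℝ) ^ (B \ A).card * p ((A ∪ B)ᶜ) * τ A := by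
  have hB : B.Nonempty := Finset.card_pos.mp hodd.pos
  have step1 : ∑ A : Finset (Fin d),
      (-1 : ℝ) ^ (B \ A).card * p (A \ B) * (τ Finset.univ - τ Aᶜ)
      = - ∑ A : Finset (Fin d), (-1 : ℝ) ^ (B \ A).card * p (A \ B) * τ Aᶜ := by
    have : ∀ A : Finset (Fin d),
        (-1 : ℝ) ^ (B \ A).card * p (A \ B) * (τ Finset.univ - τ Aᶜ)
        = ((-1 : ℝ) ^ (B \ A).card * p (A \ B)) * τ Finset.univ
          - (-1 : ℝ) ^ (B \ A).card * p (A \ B) * τ Aᶜ := fun A => by ring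
    rw [Finset.sum_congr rfl (fun A _ => this A), Finset.sum_sub_distrib,
      ← Finset.sum_mul, aux_sum_zero B hB p, zero_mul, zero_sub]
  rw [step1]
  have step2 : ∑ A : Finset (Fin d), (-1 : ℝ) ^ (B ∩ A).card * p ((A ∪ B)ᶜ) * τ A
      = ∑ A : Finset (Fin d), (-1 : ℝ) ^ (B \ A).card * p (A \ B) * τ Aᶜ := by
    apply Fintype.sum_bijective (fun A : Finset (Fin d) => Aᶜ)
      (Function.Involutive.bijective (fun A => compl_compl A))
    intro A
    have e1 : B \ Aᶜ = B ∩ A := by ext x; simp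
    have e2 : Aᶜ \ B = (A ∪ B)ᶜ := by ext x; simp
    rw [e1, e2, compl_compl]
  rw [← step2, ← Finset.sum_neg_distrib]
  apply Finset.sum_congr rfl
  intro A _
  rw [aux_sign (Finset.card_inter_add_card_sdiff B A) hodd]
  ring

/-- Proposition 5: for `B` of odd cardinality, the weighted factorial effect
`I_τ(B) = Σ_{A ⊆ D} (−1)^{|B∖A|} p_B(A∖B) τ(A)` is self-dual (i.e. `I_{τ*}(B) = I_τ(B)`
where `τ*(A) = τ(D) − τ(D∖A)`) for every nonnegative `τ` with `τ(∅) = 0` if and only if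
`p_B(A∖B) = p_B(D ∖ (A∪B))` for every nonempty `A ⊆ D`. -/
theorem stmt13 {d : ℕ} (B : Finset (Fin d)) (hodd : Odd B.card)
    (p : Finset (Fin d) → ℝ) (hp0 : ∀ A, 0 ≤ p A)
    (hpz : ∀ A : Finset (Fin d), ¬ A ⊆ Bᶜ → p A = 0)
    (hp1 : ∑ A ∈ Bᶜ.powerset, p A = 1) :
    (∀ τ : Finset (Fin d) → ℝ, (∀ A, 0 ≤ τ A) → τ ∅ = 0 →
        ∑ A : Finset (Fin d), (-1 : ℝ) ^ (B \ A).card * p (A \ B) * (τ Finset.univ - τ Aᶜ)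
          = ∑ A : Finset (Fin d), (-1 : ℝ) ^ (B \ A).card * p (A \ B) * τ A)
    ↔ (∀ A : Finset (Fin d), A ≠ ∅ → p (A \ B) = p ((A ∪ B)ᶜ)) := by
  constructor
  · intro H A₀ hA₀
    set τ : Finset (Fin d) → ℝ := fun A => if A = A₀ then 1 else 0 with hτ
    have hτ0 : ∀ A, 0 ≤ τ A := by intro A; simp only [hτ]; split <;> norm_num
    have hτz : τ ∅ = 0 := by simp [hτ, Ne.symm hA₀]
    have h1 := H τ hτ0 hτz
    rw [aux_rw B hodd p τ] at h1
    simp only [hτ, mul_ite, mul_one, mul_zero, Finset.sum_ite_eq', Finset.mem_univ,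
      if_true] at h1
    have hne : ((-1 : ℝ) ^ (B \ A₀).card) ≠ 0 := pow_ne_zero _ (by norm_num)
    exact (mul_left_cancel₀ hne (by linarith [h1])).symm
  · intro hEq τ hτ0 hτz
    rw [aux_rw B hodd p τ]
    apply Finset.sum_congr rfl
    intro A _
    by_cases hA : A = ∅
    · subst hA; rw [hτz]; ring
    · rw [hEq A hA]
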